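/- Let q be a prime power, let A ⊆ 𝔽_q^n, and let M, D ∈ ℕ. If C(M + n − 1, n) · |A| < C(D + n, n), then there exists a nonzero polynomial P ∈ 𝔽_q[x_1, …, x_n] of degree at most D that vanishes on A with multiplicity M. -/

import Mathlib

/-- The `β`-th Hasse derivative of a multivariate polynomial `f`: the coefficient of
`y^β` in `f(x + y)`, as a polynomial in `x`. -/
noncomputable def hasseDeriv {m : ℕ} {F : Type*} [CommRing F]
    (β : Fin m →₀ ℕ) (f : MvPolynomial (Fin m) F) : MvPolynomial (Fin m) F :=
  MvPolynomial.coeff β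
    (MvPolynomial.eval₂ (MvPolynomial.C.comp MvPolynomial.C)
      (fun i => MvPolynomial.C (MvPolynomial.X i) + MvPolynomial.X i) f)

/-- The multiplicity of `f` at the point `a`: the supremum of all `M ∈ ℤ_{≥0}` such that
`f^{(β)}(a) = 0` for all `β` with `|β| < M`. -/
noncomputable def polyMult {m : ℕ} {F : Type*} [CommRing F]
    (f : MvPolynomial (Fin m) F) (a : Fin m → F) : ℕ∞ :=
  ⨆ M ∈ {M : ℕ | ∀ β : Fin m →₀ ℕ, (∑ i, β i) < M →
    MvPolynomial.eval a (hasseDeriv β f) = 0}, (M : ℕ∞)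

lemma hasseDeriv_sub {m : ℕ} {F : Type*} [CommRing F]
    (β : Fin m →₀ ℕ) (f g : MvPolynomial (Fin m) F) :
    hasseDeriv β (f - g) = hasseDeriv β f - hasseDeriv β g := by
  simp [hasseDeriv, MvPolynomial.eval₂_sub, MvPolynomial.coeff_sub]

/-- Tuples in `Fin n → ℕ` with coordinate sum at most `d`. -/
def Tset (n d : ℕ) : Finset (Fin n → ℕ) :=
  (Fintype.piFinset fun _ => Finset.range (d + 1)).filter fun t => ∑ i, t i ≤ d

lemma mem_Tset {n d : ℕ} {t : Fin n → ℕ} : t ∈ Tset n d ↔ ∑ i, t i ≤ d := by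
  simp only [Tset, Finset.mem_filter, Fintype.mem_piFinset, Finset.mem_range]
  refine ⟨fun h => h.2, fun h => ⟨fun i => ?_, h⟩⟩
  have : t i ≤ ∑ j, t j :=
    Finset.single_le_sum (f := t) (fun _ _ => Nat.zero_le _) (Finset.mem_univ i)
  omega

lemma card_Tset : ∀ n d : ℕ, (Tset n d).card = (d + n).choose n
  | 0, d => by
    have h : Tset 0 d = {fun i => i.elim0} := by
      ext t
      simp only [mem_Tset, Finset.mem_singleton]
      constructor
      · intro _; exact funext fun i => i.elim0
      · intro h; subst h; simp
    simp [h]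
  | n + 1, d => by
    have key : (Tset (n + 1) d).card
        = (((Finset.range (d + 1)).sigma fun k => Tset n (d - k))).card := by
      refine (Finset.card_bij (fun p _ => Fin.cons p.1 p.2) ?_ ?_ ?_).symm
      · rintro ⟨k, t⟩ hp
        simp only [Finset.mem_sigma, Finset.mem_range] at hp
        rw [mem_Tset, Fin.sum_univ_succ]
        simp only [Fin.cons_zero, Fin.cons_succ]
        have := mem_Tset.mp hp.2
        have hk : k ≤ d := by omega
        omega
      · rintro ⟨k₁, t₁⟩ h₁ ⟨k₂, t₂⟩ h₂ heq
        have h0 : k₁ = k₂ := by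
          have := congrFun heq 0; simpa using this
        have h1 : t₁ = t₂ := by
          funext i
          have := congrFun heq i.succ; simpa using this
        subst h0; subst h1; rfl
      · intro t ht
        refine ⟨⟨t 0, Fin.tail t⟩, ?_, ?_⟩
        · have hsum := mem_Tset.mp ht
          rw [Fin.sum_univ_succ] at hsum
          simp only [Finset.mem_sigma, Finset.mem_range, mem_Tset]
          constructor
          · omega
          · have : ∑ i, Fin.tail t i = ∑ i : Fin n, t i.succ := rfl
            omega
        · show Fin.cons (t 0) (Fin.tail t) = t
          exact Fin.cons_self_tail t
    rw [key, Finset.card_sigma]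
    have hterm : ∀ k ∈ Finset.range (d + 1),
        (Tset n (d - k)).card = ((d - k) + n).choose n := fun k _ => card_Tset n (d - k)
    rw [Finset.sum_congr rfl hterm]
    have hrefl : ∑ k ∈ Finset.range (d + 1), ((d - k) + n).choose n
        = ∑ j ∈ Finset.range (d + 1), (j + n).choose n := by
      have := Finset.sum_range_reflect (fun j => (j + n).choose n) (d + 1)
      simpa using this
    rw [hrefl, Nat.sum_range_add_choose, show d + n + 1 = d + (n + 1) by omega]

/-- If `C(M + n - 1, n) · |A| < C(D + n, n)`, there is a nonzero polynomial of degree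
at most `D` vanishing on `A` with multiplicity `M`. -/
theorem exists_poly_vanishing_with_multiplicity {F : Type*} [Field F] [Fintype F]
    (q n M D : ℕ) (hq : IsPrimePow q) (hcard : Fintype.card F = q)
    (A : Set (Fin n → F))
    (hA : Nat.choose (M + n - 1) n * A.ncard < Nat.choose (D + n) n) :
    ∃ P : MvPolynomial (Fin n) F, P ≠ 0 ∧ P.totalDegree ≤ D ∧
      ∀ a ∈ A, (M : ℕ∞) ≤ polyMult P a := by
  classical
  set e := (Finsupp.equivFunOnFinite : (Fin n →₀ ℕ) ≃ (Fin n → ℕ)) with he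
  set T : Finset (Fin n → ℕ) := Tset n D with hT
  set B : Finset (Fin n → ℕ) := (Tset n M).filter (fun t => ∑ i, t i < M) with hB
  have hmemB : ∀ t : Fin n → ℕ, t ∈ B ↔ ∑ i, t i < M := by
    intro t
    simp only [hB, Finset.mem_filter, mem_Tset]
    omega
  have hAfin : A.Finite := Set.toFinite A
  set A' : Finset (Fin n → F) := hAfin.toFinset with hA'
  have hncard : A.ncard = A'.card := Set.ncard_eq_toFinset_card A hAfin
  -- cardinality of B
  have hBcard : B.card ≤ (M + n - 1).choose n := by
    rcases Nat.eq_zero_or_pos M with hM0 | hMpos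
    · have : B = ∅ := by
        ext t; simp [hmemB, hM0]
      simp [this]
    · have hBeq : B = Tset n (M - 1) := by
        ext t; rw [hmemB, mem_Tset]; omega
      rw [hBeq, card_Tset]
      have : M - 1 + n = M + n - 1 := by omega
      rw [this]
  -- the exponent inequality
  have hexp : A'.card * B.card < T.card := by
    rw [hT, card_Tset]
    calc A'.card * B.card = B.card * A'.card := Nat.mul_comm _ _
      _ ≤ (M + n - 1).choose n * A.ncard := by
          rw [hncard]; exact Nat.mul_le_mul_right _ hBcard
      _ < (D + n).choose n := hA
  -- the polynomial attached to a coefficient vector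
  let Pg : ((↥T) → F) → MvPolynomial (Fin n) F := fun g =>
    ∑ s ∈ T.attach, MvPolynomial.monomial (e.symm s.1) (g s)
  have hcoeff : ∀ (g : (↥T) → F) (s : ↥T),
      MvPolynomial.coeff (e.symm s.1) (Pg g) = g s := by
    intro g s
    rw [MvPolynomial.coeff_sum]
    rw [Finset.sum_eq_single s]
    · simp [MvPolynomial.coeff_monomial]
    · intro b _ hbs
      rw [MvPolynomial.coeff_monomial, if_neg]
      intro hcontr
      exact hbs (Subtype.ext (e.symm.injective hcontr))
    · intro h; exact absurd (Finset.mem_attach _ s) h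
  have hdeg : ∀ g : (↥T) → F, (Pg g).totalDegree ≤ D := by
    intro g
    refine (MvPolynomial.totalDegree_finset_sum _ _).trans (Finset.sup_le fun s _ => ?_)
    refine (MvPolynomial.totalDegree_monomial_le _ _).trans ?_
    rw [Finsupp.sum_fintype _ _ (fun _ => rfl)]
    simpa [he] using mem_Tset.mp s.2
  -- the evaluation map
  let Φ : ((↥T) → F) → ((↥A' × ↥B) → F) := fun g p =>
    MvPolynomial.eval p.1.1 (hasseDeriv (e.symm p.2.1) (Pg g))
  -- pigeonhole
  have hq1 : 1 < q := hq.one_lt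
  have hlt : Fintype.card ((↥A' × ↥B) → F) < Fintype.card ((↥T) → F) := by
    rw [Fintype.card_fun, Fintype.card_fun, hcard, Fintype.card_prod,
      Fintype.card_coe, Fintype.card_coe, Fintype.card_coe]
    exact Nat.pow_lt_pow_right hq1 hexp
  obtain ⟨g₁, g₂, hne, hΦeq⟩ := Fintype.exists_ne_map_eq_of_card_lt Φ hlt
  refine ⟨Pg g₁ - Pg g₂, ?_, ?_, ?_⟩
  · -- nonzero
    intro hzero
    apply hne
    funext s
    have : MvPolynomial.coeff (e.symm s.1) (Pg g₁ - Pg g₂) = 0 := by rw [hzero]; simp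
    rw [MvPolynomial.coeff_sub, hcoeff, hcoeff, sub_eq_zero] at this
    exact this
  · -- degree
    rw [sub_eq_add_neg]
    refine (MvPolynomial.totalDegree_add _ _).trans ?_
    rw [MvPolynomial.totalDegree_neg]
    exact max_le (hdeg g₁) (hdeg g₂)
  · -- multiplicity
    intro a ha
    have ha' : a ∈ A' := hAfin.mem_toFinset.mpr ha
    have hM : M ∈ {M' : ℕ | ∀ β : Fin n →₀ ℕ, (∑ i, β i) < M' →
        MvPolynomial.eval a (hasseDeriv β (Pg g₁ - Pg g₂)) = 0} := by
      intro β hβ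
      have hβB : e β ∈ B := by
        rw [hmemB]
        simpa [he] using hβ
      have hp := congrFun hΦeq (⟨a, ha'⟩, ⟨e β, hβB⟩)
      simp only [Φ, Equiv.symm_apply_apply] at hp
      rw [hasseDeriv_sub, map_sub, hp, sub_self]
    exact le_biSup (fun M' : ℕ => (M' : ℕ∞)) hM
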